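/- For a ring R, the following conditions are equivalent: (1) R is a semiregular ring; (2) every finitely generated projective right R-module is a d-CS-Rickart module. -/

import Mathlib

namespace CSRickartPaper

section Defs

variable {R : Type*} [Ring R] {M : Type*} [AddCommGroup M] [Module R M]

/-- `N` is an essential submodule of `P` (inside the ambient module `M`):
`N ≤ P` and every submodule of `P` intersecting `N` trivially is zero. -/
def EssentialIn (N P : Submodule R M) : Prop :=
  N ≤ P ∧ ∀ K : Submodule R M, K ≤ P → N ⊓ K = ⊥ → K = ⊥

/-- `N` is a small (superfluous) submodule of `P`. -/
def SmallIn (N P : Submodule R M) : Prop :=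
  N ≤ P ∧ ∀ K : Submodule R M, K ≤ P → N ⊔ K = P → K = P

/-- `N` is a direct summand of `M`. -/
def IsDirectSummand (N : Submodule R M) : Prop :=
  ∃ K : Submodule R M, IsCompl N K

/-- `N` lies above the direct summand `D` of `M`: `M = D ⊕ K`, `D ≤ N` and
`N ⊓ K` is small in `K`. -/
def LiesAbove (N D : Submodule R M) : Prop :=
  ∃ K : Submodule R M, IsCompl D K ∧ D ≤ N ∧ SmallIn (N ⊓ K) K

/-- `N` lies above a direct summand of `M`. -/
def LiesAboveSummand (N : Submodule R M) : Prop :=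
  ∃ D : Submodule R M, LiesAbove N D

end Defs

section ModuleDefs

variable (R : Type*) [Ring R] (M : Type*) [AddCommGroup M] [Module R M]

/-- `M` is a CS-Rickart module: the kernel of every endomorphism is essential
in a direct summand `eM`, `e` an idempotent endomorphism. -/
def IsCSRickart : Prop :=
  ∀ φ : Module.End R M, ∃ e : Module.End R M, IsIdempotentElem e ∧
    EssentialIn (LinearMap.ker φ) (LinearMap.range e)

/-- `M` is a d-CS-Rickart module: the image of every endomorphism lies above a
direct summand of `M`. -/
def IsDCSRickart : Prop :=
  ∀ φ : Module.End R M, LiesAboveSummand (LinearMap.range φ)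

/-- `M` is a Rickart module. -/
def IsRickart : Prop :=
  ∀ φ : Module.End R M, ∃ e : Module.End R M, IsIdempotentElem e ∧
    LinearMap.ker φ = LinearMap.range e

/-- `M` is a dual Rickart module. -/
def IsDRickart : Prop :=
  ∀ φ : Module.End R M, ∃ e : Module.End R M, IsIdempotentElem e ∧
    LinearMap.range φ = LinearMap.range e

/-- `M` is a CS (extending) module. -/
def IsCSModule : Prop :=
  ∀ N : Submodule R M, ∃ D : Submodule R M, IsDirectSummand D ∧ EssentialIn N D

/-- `M` is a lifting (d-CS) module. -/
def IsLifting : Prop :=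
  ∀ N : Submodule R M, LiesAboveSummand N

/-- `M` is a singular module: the annihilator of every element is an essential
ideal of `R`. -/
def IsSingularModule : Prop :=
  ∀ m : M, EssentialIn (LinearMap.ker (LinearMap.toSpanSingleton R M m)) (⊤ : Submodule R R)

/-- `M` is uniform: every nonzero submodule is essential. -/
def IsUniformModule : Prop :=
  ∀ N : Submodule R M, N ≠ ⊥ → EssentialIn N (⊤ : Submodule R M)

/-- `M` satisfies the C₂ condition: every submodule isomorphic to a direct
summand is itself a direct summand. -/
def IsC2 : Prop :=
  ∀ N D : Submodule R M, IsDirectSummand D → Nonempty (N ≃ₗ[R] D) → IsDirectSummand N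

/-- `M` is K-nonsingular. -/
def IsKNonsingular : Prop :=
  ∀ φ : Module.End R M, ∀ N : Submodule R M, EssentialIn N (⊤ : Submodule R M) →
    N ≤ LinearMap.ker φ → φ = 0

/-- `M` is T-noncosingular. -/
def IsTNoncosingular : Prop :=
  ∀ φ : Module.End R M, φ ≠ 0 → ¬ SmallIn (LinearMap.range φ) (⊤ : Submodule R M)

/-- `M` is an SIP-CS module. -/
def IsSIPCS : Prop :=
  ∀ A B : Submodule R M, IsDirectSummand A → IsDirectSummand B →
    ∃ D : Submodule R M, IsDirectSummand D ∧ EssentialIn (A ⊓ B) D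

/-- `M` is an SSP-d-CS module. -/
def IsSSPdCS : Prop :=
  ∀ A B : Submodule R M, IsDirectSummand A → IsDirectSummand B →
    LiesAboveSummand (A ⊔ B)

end ModuleDefs

section RelDefs

variable (R : Type*) [Ring R] (M N : Type*) [AddCommGroup M] [Module R M]
  [AddCommGroup N] [Module R N]

/-- `M` is relatively CS-Rickart to `N`. -/
def IsRelCSRickart : Prop :=
  ∀ φ : M →ₗ[R] N, ∃ e : Module.End R M, IsIdempotentElem e ∧
    EssentialIn (LinearMap.ker φ) (LinearMap.range e)

/-- `M` is relatively d-CS-Rickart to `N`. -/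
def IsRelDCSRickart : Prop :=
  ∀ φ : M →ₗ[R] N, LiesAboveSummand (LinearMap.range φ)

/-- `N` is `M`-injective. -/
def IsRelInjective : Prop :=
  ∀ (A : Submodule R M) (f : A →ₗ[R] N), ∃ g : M →ₗ[R] N, ∀ a : A, g a = f a

end RelDefs

section RingDefs

variable (R : Type*) [Ring R]

/-- The annihilator of an element `a` of `R`, as an ideal (kernel of `r ↦ r • a`). -/
def annElem (a : R) : Submodule R R :=
  LinearMap.ker (LinearMap.toSpanSingleton R R a)

/-- The annihilator of a subset `X` of `R`. -/
def annSet (X : Set R) : Submodule R R :=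
  ⨅ x ∈ X, annElem R x

/-- The principal ideal generated by `e`, i.e. the image of `r ↦ r • e`. -/
def idealGen (e : R) : Submodule R R :=
  LinearMap.range (LinearMap.toSpanSingleton R R e)

/-- `R` is an ACS ring: the annihilator of every element is essential in a
direct summand `eR` of `R`. -/
def IsACSRing : Prop :=
  ∀ a : R, ∃ e : R, IsIdempotentElem e ∧ EssentialIn (annElem R a) (idealGen R e)

/-- `R` is an essentially Baer ring. -/
def IsEssentiallyBaer : Prop :=
  ∀ X : Set R, X.Nonempty → ∃ e : R, IsIdempotentElem e ∧
    EssentialIn (annSet R X) (idealGen R e)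

/-- The Jacobson radical of the ring `R`. -/
noncomputable def jacRad : Ideal R := Ideal.jacobson (⊥ : Ideal R)

/-- `R` is semiregular: `R/J(R)` is von Neumann regular and idempotents lift
modulo `J(R)` (stated elementwise). -/
def IsSemiregularRing : Prop :=
  (∀ a : R, ∃ b : R, a - a * b * a ∈ jacRad R) ∧
  (∀ a : R, a - a * a ∈ jacRad R →
    ∃ e : R, IsIdempotentElem e ∧ e - a ∈ jacRad R)

/-- `J(R)` coincides with the singular ideal `Z(R)`. -/
def JacEqSingular : Prop :=
  ∀ a : R, a ∈ jacRad R ↔ EssentialIn (annElem R a) (⊤ : Submodule R R)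

end RingDefs

section GenDefs

variable {R : Type*} [Ring R] {M : Type*} [AddCommGroup M] [Module R M]

/-- A submodule is `n`-generated if it is spanned by at most `n` elements. -/
def NGen (n : ℕ) (N : Submodule R M) : Prop :=
  ∃ f : Fin n → M, Submodule.span R (Set.range f) = N

end GenDefs

end CSRickartPaper

namespace CSRickartPaper

universe u

section Jac
variable {R : Type*} [Ring R]

lemma jac_mul_right {x : R} (hx : x ∈ jacRad R) (y : R) : x * y ∈ jacRad R := by
  unfold jacRad at hx ⊢
  exact Ideal.mul_mem_right y _ hx

lemma jac_left_inv {x : R} (hx : x ∈ jacRad R) : ∃ z, z * (1 - x) = 1 := by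
  obtain ⟨z, hz⟩ := (Ideal.mem_jacobson_iff.mp hx) (-1)
  rw [Ideal.mem_bot] at hz
  have hz' : -(z * x) + z - 1 = 0 := by
    have : z * (-1) * x = -(z * x) := by noncomm_ring
    rw [← this]; exact hz
  have h1 : -(z * x) + z = 1 := sub_eq_zero.mp hz'
  refine ⟨z, ?_⟩
  rw [mul_sub, mul_one]
  rw [show z - z * x = -(z * x) + z by abel]
  exact h1

lemma jac_isUnit_one_sub {x : R} (hx : x ∈ jacRad R) : IsUnit (1 - x) := by
  obtain ⟨z, hz⟩ := jac_left_inv hx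
  have hzx : z * x ∈ jacRad R := Ideal.mul_mem_left _ z hx
  have hz1 : z = 1 + z * x := by
    have h1 : z - z * x = 1 := by rw [← hz]; noncomm_ring
    exact sub_eq_iff_eq_add.mp h1
  obtain ⟨w, hw⟩ := jac_left_inv (neg_mem hzx)
  have hwz : w * z = 1 := by
    rw [hz1]
    have : 1 - -(z * x) = 1 + z * x := by noncomm_ring
    rw [← this, hw]
  have hweq : w = 1 - x := by
    calc w = w * (z * (1 - x)) := by rw [hz, mul_one]
    _ = (w * z) * (1 - x) := by rw [mul_assoc]
    _ = 1 - x := by rw [hwz, one_mul]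
  exact ⟨⟨1 - x, z, by rw [← hweq]; exact hwz, hz⟩, rfl⟩

lemma jac_mem_of_forall_max {x : R} (h : ∀ m : Ideal R, m.IsMaximal → x ∈ m) :
    x ∈ jacRad R := by
  unfold jacRad Ideal.jacobson
  rw [Submodule.mem_sInf]
  intro m hm
  exact h m hm.2

lemma jac_gen_of_small {x : R} (h : SmallIn (Submodule.span R {x}) (⊤ : Submodule R R)) :
    x ∈ jacRad R := by
  refine jac_mem_of_forall_max (fun m hm => ?_)
  by_contra hx
  have hne : m ≠ Submodule.span R {x} ⊔ m := by
    intro he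
    exact hx (he ▸ le_sup_left (a := Submodule.span R {x}) (Submodule.mem_span_singleton_self x))
  have hlt : m < Submodule.span R {x} ⊔ m := lt_of_le_of_ne le_sup_right hne
  have htop : Submodule.span R {x} ⊔ m = ⊤ := hm.1.2 _ hlt
  exact hm.ne_top (h.2 m le_top htop)

end Jac

section Small

variable {R : Type*} [Ring R] {M : Type*} [AddCommGroup M] [Module R M]

lemma smallIn_mono {S' S P : Submodule R M} (h : SmallIn S P) (h1 : S' ≤ S) : SmallIn S' P := by
  refine ⟨le_trans h1 h.1, fun K hK hSK => h.2 K hK (le_antisymm (sup_le h.1 hK) ?_)⟩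
  rw [← hSK]
  exact sup_le_sup_right h1 K

lemma smallIn_top_of_summand {S K D : Submodule R M} (hc : IsCompl D K) (h : SmallIn S K) :
    SmallIn S (⊤ : Submodule R M) := by
  refine ⟨le_top, fun T _ hST => ?_⟩
  have h2 : S ⊔ (T ⊓ K) = K := by
    rw [← sup_inf_assoc_of_le T h.1, hST, top_inf_eq]
  have hKT : K ≤ T := by
    have := h.2 (T ⊓ K) inf_le_right h2
    rw [← this]; exact inf_le_left
  rw [← hST]
  exact (sup_eq_right.mpr (le_trans h.1 hKT)).symm

lemma smallIn_of_le_summand {S A B : Submodule R M} (h : SmallIn S (⊤ : Submodule R M))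
    (hSB : S ≤ B) (hc : IsCompl A B) : SmallIn S B := by
  refine ⟨hSB, fun K hK hSK => ?_⟩
  have h1 : S ⊔ (K ⊔ A) = ⊤ := by
    rw [← sup_assoc, hSK, hc.symm.sup_eq_top]
  have h2 : K ⊔ A = ⊤ := h.2 _ le_top h1
  have h3 : (K ⊔ A) ⊓ B = K ⊔ (A ⊓ B) := sup_inf_assoc_of_le A hK
  rw [h2, top_inf_eq, hc.inf_eq_bot, sup_bot_eq] at h3
  exact h3.symm

end Small

section Nak

variable {R : Type*} [Ring R] {M : Type*} [AddCommGroup M] [Module R M]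

lemma nak_aux : ∀ (n : ℕ) (v : Fin n → M) (A : Fin n → Fin n → R),
    (∀ i j, A i j ∈ jacRad R) → (∀ i, v i = ∑ j, A i j • v j) → ∀ i, v i = 0 := by
  intro n
  induction n with
  | zero => intro v A hA hv i; exact absurd i.2 (by omega)
  | succ n ih =>
    intro v A hA hv
    obtain ⟨u, hu⟩ := jac_isUnit_one_sub (hA (Fin.last n) (Fin.last n))
    have hz1 : (↑u⁻¹ : R) * (1 - A (Fin.last n) (Fin.last n)) = 1 := by
      rw [← hu]; exact u.inv_mul
    have h1 : v (Fin.last n) = (∑ j : Fin n, A (Fin.last n) j.castSucc • v j.castSucc)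
        + A (Fin.last n) (Fin.last n) • v (Fin.last n) := by
      conv_lhs => rw [hv (Fin.last n)]
      rw [Fin.sum_univ_castSucc]
    have h2 : (1 - A (Fin.last n) (Fin.last n)) • v (Fin.last n)
        = ∑ j : Fin n, A (Fin.last n) j.castSucc • v j.castSucc := by
      rw [sub_smul, one_smul]; exact sub_eq_of_eq_add h1
    have hvL : v (Fin.last n)
        = ∑ j : Fin n, ((↑u⁻¹ : R) * A (Fin.last n) j.castSucc) • v j.castSucc := by
      calc v (Fin.last n)
          = ((↑u⁻¹ : R) * (1 - A (Fin.last n) (Fin.last n))) • v (Fin.last n) := by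
            rw [hz1, one_smul]
      _ = (↑u⁻¹ : R) • ((1 - A (Fin.last n) (Fin.last n)) • v (Fin.last n)) := mul_smul _ _ _
      _ = (↑u⁻¹ : R) • ∑ j : Fin n, A (Fin.last n) j.castSucc • v j.castSucc := by rw [h2]
      _ = ∑ j : Fin n, ((↑u⁻¹ : R) * A (Fin.last n) j.castSucc) • v j.castSucc := by
            rw [Finset.smul_sum]
            exact Finset.sum_congr rfl (fun j _ => (mul_smul _ _ _).symm)
    have hwz : ∀ j : Fin n, v j.castSucc = 0 := by
      refine ih (fun j => v j.castSucc)
        (fun i j => A i.castSucc j.castSucc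
          + A i.castSucc (Fin.last n) * ((↑u⁻¹ : R) * A (Fin.last n) j.castSucc))
        (fun i j => add_mem (hA _ _) (jac_mul_right (hA _ _) _)) ?_
      intro i
      have g1 : v i.castSucc = (∑ j : Fin n, A i.castSucc j.castSucc • v j.castSucc)
          + A i.castSucc (Fin.last n) • v (Fin.last n) := by
        conv_lhs => rw [hv i.castSucc]
        rw [Fin.sum_univ_castSucc]
      rw [g1, hvL, Finset.smul_sum, ← Finset.sum_add_distrib]
      refine Finset.sum_congr rfl (fun j _ => ?_)
      rw [add_smul]
      congr 1
      exact (mul_smul _ _ _).symm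
    have hvL0 : v (Fin.last n) = 0 := by
      rw [hvL]
      exact Finset.sum_eq_zero (fun j _ => by rw [hwz j, smul_zero])
    intro i
    refine Fin.lastCases hvL0 (fun j => hwz j) i

end Nak

section Drad

variable (R : Type*) [Ring R] (M : Type*) [AddCommGroup M] [Module R M]

/-- Substitute for `rad M = J(R)M`. -/
def drad : Submodule R M :=
  Submodule.span R {x | ∃ c ∈ jacRad R, ∃ m : M, c • m = x}

variable {R M}

lemma smul_mem_drad {c : R} (hc : c ∈ jacRad R) (m : M) : c • m ∈ drad R M :=
  Submodule.subset_span ⟨c, hc, m, rfl⟩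

lemma drad_map_le {M' : Type*} [AddCommGroup M'] [Module R M'] (f : M →ₗ[R] M') :
    Submodule.map f (drad R M) ≤ drad R M' := by
  rw [drad, Submodule.map_span, Submodule.span_le]
  rintro x ⟨y, ⟨c, hc, m, rfl⟩, rfl⟩
  rw [map_smul]
  exact smul_mem_drad hc (f m)

lemma mem_drad_R {x : R} (hx : x ∈ jacRad R) : x ∈ drad R R := by
  have := smul_mem_drad hx (1 : R)
  rwa [smul_eq_mul, mul_one] at this

lemma mem_drad_prod {M₂ : Type*} [AddCommGroup M₂] [Module R M₂] {x : M × M₂}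
    (h1 : x.1 ∈ drad R M) (h2 : x.2 ∈ drad R M₂) : x ∈ drad R (M × M₂) := by
  have e1 : (LinearMap.inl R M M₂) x.1 ∈ drad R (M × M₂) :=
    drad_map_le _ (Submodule.mem_map_of_mem h1)
  have e2 : (LinearMap.inr R M M₂) x.2 ∈ drad R (M × M₂) :=
    drad_map_le _ (Submodule.mem_map_of_mem h2)
  have : x = (LinearMap.inl R M M₂) x.1 + (LinearMap.inr R M M₂) x.2 := by
    simp [Prod.ext_iff]
  rw [this]
  exact add_mem e1 e2

lemma drad_rep {n : ℕ} {v : Fin n → M} (hv : Submodule.span R (Set.range v) = ⊤)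
    {x : M} (hx : x ∈ drad R M) :
    ∃ d : Fin n → R, (∀ j, d j ∈ jacRad R) ∧ x = ∑ j, d j • v j := by
  induction hx using Submodule.span_induction with
  | mem y hy =>
    obtain ⟨c, hc, m, rfl⟩ := hy
    have hm : m ∈ Submodule.span R (Set.range v) := hv ▸ Submodule.mem_top
    obtain ⟨r, hr⟩ := (Submodule.mem_span_range_iff_exists_fun R).mp hm
    refine ⟨fun j => c * r j, fun j => jac_mul_right hc _, ?_⟩
    rw [← hr, Finset.smul_sum]
    exact Finset.sum_congr rfl (fun j _ => (mul_smul _ _ _).symm)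
  | zero => exact ⟨0, fun j => zero_mem _, by simp⟩
  | add y z _ _ ihy ihz =>
    obtain ⟨d, hd, rfl⟩ := ihy
    obtain ⟨d', hd', rfl⟩ := ihz
    exact ⟨d + d', fun j => add_mem (hd j) (hd' j), by
      rw [← Finset.sum_add_distrib]
      exact Finset.sum_congr rfl (fun j _ => by rw [Pi.add_apply, add_smul])⟩
  | smul r y _ ihy =>
    obtain ⟨d, hd, rfl⟩ := ihy
    refine ⟨fun j => r * d j, fun j => Ideal.mul_mem_left _ r (hd j), ?_⟩
    rw [Finset.smul_sum]
    exact Finset.sum_congr rfl (fun j _ => (mul_smul _ _ _).symm)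

lemma small_of_le_drad [Module.Finite R M] {S : Submodule R M} (hS : S ≤ drad R M) :
    SmallIn S (⊤ : Submodule R M) := by
  refine ⟨le_top, fun K _ hSK => ?_⟩
  obtain ⟨n, p, hp⟩ := Module.Finite.exists_fin (R := R) (M := M)
  set mk := K.mkQ with hmk
  have hvspan : Submodule.span R (Set.range (fun i => mk (p i))) = ⊤ := by
    have : Set.range (fun i => mk (p i)) = mk '' (Set.range p) := by
      rw [← Set.range_comp]; rfl
    rw [this, ← Submodule.map_span, hp, Submodule.map_top, Submodule.range_mkQ]
  have hvdrad : ∀ i, mk (p i) ∈ drad R (M ⧸ K) := by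
    intro i
    have hpi : p i ∈ S ⊔ K := by rw [hSK]; exact Submodule.mem_top
    obtain ⟨s, hs, k, hk, hsk⟩ := Submodule.mem_sup.mp hpi
    have hk0 : mk k = 0 := by
      rw [hmk, Submodule.mkQ_apply, Submodule.Quotient.mk_eq_zero]; exact hk
    have : mk (p i) = mk s := by
      rw [← hsk, map_add, hk0, add_zero]
    rw [this]
    exact drad_map_le mk (Submodule.mem_map_of_mem (hS hs))
  have hzero : ∀ i, mk (p i) = 0 := by
    choose d hd1 hd2 using fun i => drad_rep hvspan (hvdrad i)
    exact nak_aux n _ (fun i j => d i j) (fun i j => hd1 i j) hd2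
  have htopbot : (⊤ : Submodule R (M ⧸ K)) = ⊥ := by
    rw [← hvspan]
    refine eq_bot_iff.mpr (Submodule.span_le.mpr ?_)
    rintro y ⟨i, rfl⟩
    show mk (p i) ∈ (⊥ : Submodule R (M ⧸ K))
    rw [hzero i]
    exact Submodule.zero_mem (⊥ : Submodule R (M ⧸ K))
  rw [Submodule.eq_top_iff']
  intro x
  have : mk x ∈ (⊤ : Submodule R (M ⧸ K)) := Submodule.mem_top
  rw [htopbot, Submodule.mem_bot] at this
  rw [hmk, Submodule.mkQ_apply] at this
  exact (Submodule.Quotient.mk_eq_zero K).mp this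

end Drad

section RingLevel

variable {R : Type*} [Ring R]


lemma semiregular_cyclic (h : IsSemiregularRing R) (a : R) :
    ∃ e : R, IsIdempotentElem e ∧ e ∈ Submodule.span R {a} ∧ a - a * e ∈ jacRad R := by
  obtain ⟨b, hb⟩ := h.1 a
  have hcc : (b * a) - (b * a) * (b * a) ∈ jacRad R := by
    have hid : (b * a) - (b * a) * (b * a) = b * (a - a * b * a) := by noncomm_ring
    rw [hid]
    exact Ideal.mul_mem_left _ b hb
  obtain ⟨g, hgidem, hgc⟩ := h.2 (b * a) hcc
  -- g is an idempotent with g - b*a ∈ J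
  set d := g - g * (b * a) with hd
  have hdJ : d ∈ jacRad R := by
    have hid : d = g * (g - b * a) := by
      rw [hd, mul_sub, hgidem.eq]
    rw [hid]
    exact Ideal.mul_mem_left _ g hgc
  obtain ⟨u, hu⟩ := jac_isUnit_one_sub hdJ
  set z := ((u⁻¹ : Rˣ) : R) with hz
  have hzU : z * (1 - d) = 1 := by rw [← hu]; exact u.inv_mul
  have hUz : (1 - d) * z = 1 := by rw [← hu]; exact u.mul_inv
  have hgU : g * (1 - d) = g * (b * a) := by
    rw [hd]; rw [mul_sub, mul_sub, hgidem.eq, ← mul_assoc, hgidem.eq]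
    noncomm_ring
  set e := z * (g * (1 - d)) with he
  have heidem : IsIdempotentElem e := by
    show e * e = e
    rw [he]
    calc z * (g * (1 - d)) * (z * (g * (1 - d)))
        = z * g * (((1 - d) * z) * g) * (1 - d) := by noncomm_ring
    _ = z * g * (1 * g) * (1 - d) := by rw [hUz]
    _ = z * (g * g * (1 - d)) := by noncomm_ring
    _ = z * (g * (1 - d)) := by rw [hgidem.eq]
  have hemem : e ∈ Submodule.span R {a} := by
    have : e = (z * g * b) • a := by
      rw [he, hgU, smul_eq_mul]; noncomm_ring
    rw [this]
    exact Submodule.smul_mem _ _ (Submodule.mem_span_singleton_self a)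
  have hz1J : z - 1 ∈ jacRad R := by
    have : z - 1 = z * d := by
      have h2 : z - 1 = z - z * (1 - d) := by rw [hzU]
      rw [h2]; noncomm_ring
    rw [this]
    exact Ideal.mul_mem_left _ z hdJ
  have hegJ : e - g ∈ jacRad R := by
    have hid : e - g = (z - 1) * (g * (1 - d)) + g * ((1 - d) - 1) := by
      rw [he]; noncomm_ring
    rw [hid]
    refine add_mem (jac_mul_right hz1J _) (Ideal.mul_mem_left _ g ?_)
    have : (1 - d) - 1 = -d := by noncomm_ring
    rw [this]
    exact neg_mem hdJ
  refine ⟨e, heidem, hemem, ?_⟩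
  have hid : a - a * e = (a - a * b * a) + a * ((b * a) - g) + a * (g - e) := by noncomm_ring
  rw [hid]
  refine add_mem (add_mem hb (Ideal.mul_mem_left _ a ?_)) (Ideal.mul_mem_left _ a ?_)
  · have h3 : b * a - g = -(g - b * a) := by noncomm_ring
    rw [h3]; exact neg_mem hgc
  · have h4 : g - e = -(e - g) := by noncomm_ring
    rw [h4]; exact neg_mem hegJ

lemma semiregular_fg_ideal (h : IsSemiregularRing R) (s : Finset R) :
    ∃ e : R, IsIdempotentElem e ∧ e ∈ Submodule.span R (s : Set R) ∧
      ∀ x ∈ Submodule.span R (s : Set R), x - x * e ∈ jacRad R := by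
  classical
  induction s using Finset.induction_on with
  | empty =>
    refine ⟨0, by simp [IsIdempotentElem], Submodule.zero_mem _, fun x hx => ?_⟩
    simp only [Finset.coe_empty, Submodule.span_empty, Submodule.mem_bot] at hx
    rw [hx]; simpa using (Submodule.zero_mem (jacRad R))
  | @insert a s hnot ih =>
    obtain ⟨e', he'idem, he'mem, he'J⟩ := ih
    set aa := a - a * e' with haa
    obtain ⟨e, heidem, hemem, heJ⟩ := semiregular_cyclic h aa
    obtain ⟨t, ht⟩ := Submodule.mem_span_singleton.mp hemem
    rw [smul_eq_mul] at ht
    have haae' : aa * e' = 0 := by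
      rw [haa, sub_mul, mul_assoc, he'idem.eq, sub_self]
    have hee' : e * e' = 0 := by
      rw [← ht, mul_assoc, haae', mul_zero]
    set f := e' + e - e' * e with hf
    have he'f : e' * f = e' := by
      rw [hf, mul_sub, mul_add, he'idem.eq, ← mul_assoc, he'idem.eq]
      noncomm_ring
    have hef : e * f = e := by
      rw [hf, mul_sub, mul_add, hee', heidem.eq, ← mul_assoc, hee']
      noncomm_ring
    have hfidem : IsIdempotentElem f := by
      show f * f = f
      calc f * f = e' * f + e * f - e' * (e * f) := by
            rw [hf]; noncomm_ring
      _ = e' + e - e' * e := by rw [he'f, hef]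
      _ = f := by rw [hf]
    have hspan : Submodule.span R ((insert a s : Finset R) : Set R)
        = Submodule.span R {a} ⊔ Submodule.span R (s : Set R) := by
      rw [Finset.coe_insert, Submodule.span_insert]
    have hamem : a ∈ Submodule.span R ((insert a s : Finset R) : Set R) := by
      apply Submodule.subset_span
      simp
    have he'mem2 : e' ∈ Submodule.span R ((insert a s : Finset R) : Set R) := by
      rw [hspan]; exact le_sup_right (a := Submodule.span R {a}) he'mem
    have haamem : aa ∈ Submodule.span R ((insert a s : Finset R) : Set R) := by
      rw [haa]
      refine sub_mem hamem ?_
      have : a * e' = a • e' := rfl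
      rw [this]
      exact Submodule.smul_mem _ _ he'mem2
    have hemem2 : e ∈ Submodule.span R ((insert a s : Finset R) : Set R) := by
      rw [← ht]
      have : t * aa = t • aa := rfl
      rw [this]
      exact Submodule.smul_mem _ _ haamem
    have hfmem : f ∈ Submodule.span R ((insert a s : Finset R) : Set R) := by
      rw [hf]
      refine sub_mem (add_mem he'mem2 hemem2) ?_
      have : e' * e = e' • e := rfl
      rw [this]
      exact Submodule.smul_mem _ _ hemem2
    have haaf : aa * f = aa * e := by
      rw [hf, mul_sub, mul_add, haae', ← mul_assoc, haae']
      noncomm_ring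
    have haf : a - a * f = aa - aa * e := by
      have h1 : a * f = aa * f + (a * e') * f := by
        rw [haa]; noncomm_ring
      have h2 : (a * e') * f = a * e' := by
        rw [mul_assoc, he'f]
      rw [h1, h2, haaf, haa]
      noncomm_ring
    refine ⟨f, hfidem, hfmem, fun x hx => ?_⟩
    rw [hspan] at hx
    obtain ⟨p, hp, y, hy, rfl⟩ := Submodule.mem_sup.mp hx
    obtain ⟨r, hr⟩ := Submodule.mem_span_singleton.mp hp
    rw [smul_eq_mul] at hr
    have hyf : y - y * f = (y - y * e') * (1 - f) := by
      have h1 : y * f = (y * e') * f + (y - y * e') * f := by noncomm_ring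
      have h2 : (y * e') * f = y * e' := by rw [mul_assoc, he'f]
      rw [h1, h2]
      noncomm_ring
    have hyJ : y - y * f ∈ jacRad R := by
      rw [hyf]
      exact jac_mul_right (he'J y hy) _
    have hpf : p - p * f ∈ jacRad R := by
      have h1 : p - p * f = r * (a - a * f) := by
        rw [← hr]; noncomm_ring
      rw [h1, haf]
      exact Ideal.mul_mem_left _ r heJ
    have hid : (p + y) - (p + y) * f = (p - p * f) + (y - y * f) := by noncomm_ring
    rw [hid]
    exact add_mem hpf hyJ

end RingLevel

section DPropDef

variable (R : Type*) [Ring R]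

def DProp (M : Type*) [AddCommGroup M] [Module R M] : Prop :=
  ∀ N : Submodule R M, N.FG →
    ∃ A B : Submodule R M, IsCompl A B ∧ A ≤ N ∧ N ⊓ B ≤ drad R M

variable {R}

lemma dprop_ring (h : IsSemiregularRing R) : DProp R R := by
  intro N hN
  obtain ⟨s, hs⟩ := hN
  obtain ⟨e, heidem, hemem, heJ⟩ := semiregular_fg_ideal h s
  rw [hs] at hemem heJ
  have hBe : ∀ x ∈ Submodule.span R {1 - e}, x * e = 0 := by
    intro x hx
    obtain ⟨t, ht⟩ := Submodule.mem_span_singleton.mp hx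
    rw [smul_eq_mul] at ht
    rw [← ht, mul_assoc, sub_mul, one_mul, heidem.eq, sub_self, mul_zero]
  refine ⟨Submodule.span R {e}, Submodule.span R {1 - e}, ⟨?_, ?_⟩, ?_, ?_⟩
  · rw [disjoint_iff, eq_bot_iff]
    rintro x ⟨hx1, hx2⟩
    obtain ⟨r, hr⟩ := Submodule.mem_span_singleton.mp hx1
    rw [smul_eq_mul] at hr
    have hxe : x * e = x := by rw [← hr, mul_assoc, heidem.eq]
    have : x = 0 := by rw [← hxe, hBe x hx2]
    rw [this]; exact Submodule.zero_mem _
  · rw [codisjoint_iff, eq_top_iff]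
    intro x _
    have hx : x = x * e + x * (1 - e) := by noncomm_ring
    rw [hx]
    exact Submodule.add_mem _
      (le_sup_left (b := Submodule.span R {1 - e})
        (Submodule.smul_mem _ x (Submodule.mem_span_singleton_self e)))
      (le_sup_right (a := Submodule.span R {e})
        (Submodule.smul_mem _ x (Submodule.mem_span_singleton_self (1 - e))))
  · rw [Submodule.span_le, Set.singleton_subset_iff]
    exact hemem
  · rintro x ⟨hxN, hxB⟩
    have h1 : x - x * e ∈ jacRad R := heJ x hxN
    have h2 : x * e = 0 := hBe x hxB
    rw [h2, sub_zero] at h1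
    exact mem_drad_R h1

lemma exists_lift {M M₂ : Type*} [AddCommGroup M] [Module R M] [AddCommGroup M₂]
    [Module R M₂] [Module.Projective R M₂]
    (N : Submodule R M) (f : M →ₗ[R] M₂) {A B : Submodule R M₂} (hc : IsCompl A B)
    (hAN : A ≤ Submodule.map f N) :
    ∃ ρ : ↥A →ₗ[R] M, (∀ x, ρ x ∈ N) ∧ (∀ x : ↥A, f (ρ x) = ↑x) := by
  have hproj : Module.Projective R ↥A :=
    Module.Projective.of_split A.subtype (Submodule.projectionOnto A B hc)
      (by ext x; simp [Submodule.projectionOnto_apply_left hc x])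
  set q : ↥N →ₗ[R] ↥(Submodule.map f N) :=
    LinearMap.codRestrict (Submodule.map f N) (f.comp N.subtype)
      (fun x => Submodule.mem_map_of_mem x.2) with hq
  have hqs : Function.Surjective q := by
    rintro ⟨y, hy⟩
    obtain ⟨x, hxN, hfx⟩ := Submodule.mem_map.mp hy
    exact ⟨⟨x, hxN⟩, Subtype.ext hfx⟩
  obtain ⟨hlift, hcomp⟩ :=
    Module.projective_lifting_property q (Submodule.inclusion hAN) hqs
  refine ⟨N.subtype.comp hlift, fun x => (hlift x).2, fun x => ?_⟩
  have h1 : q (hlift x) = Submodule.inclusion hAN x := LinearMap.congr_fun hcomp x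
  have h2 : ((q (hlift x) : M₂)) = f (N.subtype (hlift x)) := rfl
  have h3 : ((Submodule.inclusion hAN x : M₂)) = ↑x := rfl
  rw [← h3, ← h1, h2]
  rfl

end DPropDef

section Prod

variable {R : Type*} [Ring R] {M₁ M₂ : Type*} [AddCommGroup M₁] [Module R M₁]
  [AddCommGroup M₂] [Module R M₂]

lemma dprop_prod [Module.Projective R M₁] [Module.Projective R M₂]
    (h₁ : DProp R M₁) (h₂ : DProp R M₂) : DProp R (M₁ × M₂) := by
  intro N hN
  set π₁ := LinearMap.fst R M₁ M₂ with hπ₁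
  set π₂ := LinearMap.snd R M₁ M₂ with hπ₂
  obtain ⟨A₂, B₂, hc₂, hA₂N, hrad₂⟩ := h₂ (Submodule.map π₂ N) (hN.map π₂)
  obtain ⟨ρ, hρN, hρπ⟩ := exists_lift N π₂ hc₂ hA₂N
  set C := LinearMap.range ρ with hCdef
  have hCN : C ≤ N := by rintro x ⟨a, rfl⟩; exact hρN a
  set P' := Submodule.comap π₂ B₂ with hP'
  have hCP' : Disjoint C P' := by
    rw [disjoint_iff, eq_bot_iff]
    rintro x ⟨hx1, hx2⟩
    obtain ⟨a, rfl⟩ := hx1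
    have h1 : π₂ (ρ a) ∈ B₂ := hx2
    rw [hρπ a] at h1
    have h2 : (a : M₂) ∈ A₂ ⊓ B₂ := ⟨a.2, h1⟩
    rw [hc₂.inf_eq_bot, Submodule.mem_bot] at h2
    have ha0 : a = 0 := Subtype.ext (by simpa using h2)
    rw [ha0, map_zero]; exact Submodule.zero_mem _
  have hCP'top : C ⊔ P' = ⊤ := by
    rw [eq_top_iff]
    intro x _
    have hx2 : π₂ x ∈ A₂ ⊔ B₂ := by rw [hc₂.sup_eq_top]; trivial
    obtain ⟨a, ha, b, hb, hab⟩ := Submodule.mem_sup.mp hx2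
    refine Submodule.mem_sup.mpr ⟨ρ ⟨a, ha⟩, ⟨_, rfl⟩, x - ρ ⟨a, ha⟩, ?_, by abel⟩
    show π₂ (x - ρ ⟨a, ha⟩) ∈ B₂
    rw [map_sub, hρπ ⟨a, ha⟩]
    have : π₂ x - a = b := by rw [← hab]; abel
    rw [this]; exact hb
  have hcompl1 : IsCompl C P' := ⟨hCP', codisjoint_iff.mpr hCP'top⟩
  set pr := Submodule.projectionOnto P' C hcompl1.symm with hpr
  set p' : M₁ × M₂ →ₗ[R] M₁ × M₂ := P'.subtype.comp pr with hp'def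
  have hp'P' : ∀ x, p' x ∈ P' := fun x => (pr x).2
  have hp'sub : ∀ x, x - p' x ∈ C := by
    intro x
    have h1 : (Submodule.projectionOnto C P' hcompl1 x : M₁ × M₂) + (pr x : M₁ × M₂) = x :=
      Submodule.projection_add_projection_eq_self hcompl1 x
    have h2 : x - (pr x : M₁ × M₂)
        = (Submodule.projectionOnto C P' hcompl1 x : M₁ × M₂) :=
      sub_eq_of_eq_add h1.symm
    show x - (pr x : M₁ × M₂) ∈ C
    rw [h2]
    exact (Submodule.projectionOnto C P' hcompl1 x).2
  have hp'fix : ∀ x ∈ P', p' x = x := by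
    intro x hx
    show (pr x : M₁ × M₂) = x
    have := Submodule.projectionOnto_apply_left hcompl1.symm ⟨x, hx⟩
    exact congrArg Subtype.val this
  set N' := Submodule.map p' N with hN'def
  have hN'N : N' ≤ N := by
    rintro x ⟨y, hy, rfl⟩
    have : p' y = y - (y - p' y) := by abel
    rw [this]
    exact Submodule.sub_mem _ hy (hCN (hp'sub y))
  have hN'P' : N' ≤ P' := by rintro x ⟨y, hy, rfl⟩; exact hp'P' y
  have hNP'N' : N ⊓ P' ≤ N' := by
    rintro x ⟨hxN, hxP'⟩
    exact ⟨x, hxN, hp'fix x hxP'⟩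
  have hNsplit : N ≤ C ⊔ N' := by
    intro x hx
    refine Submodule.mem_sup.mpr ⟨x - p' x, hp'sub x, p' x, ⟨x, hx, rfl⟩, by abel⟩
  -- second step
  obtain ⟨A₁, B₁, hc₁, hA₁N, hrad₁⟩ := h₁ (Submodule.map π₁ N') ((hN.map p').map π₁)
  obtain ⟨ρ₁, hρ₁N, hρ₁π⟩ := exists_lift N' π₁ hc₁ hA₁N
  set C' := LinearMap.range ρ₁ with hC'def
  have hC'N' : C' ≤ N' := by rintro x ⟨a, rfl⟩; exact hρ₁N a
  set Bp := Submodule.prod B₁ B₂ with hBp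
  have hBpP' : Bp ≤ P' := fun x hx => hx.2
  have hC'Bp : ∀ x, x ∈ C' → x ∈ Bp → x = 0 := by
    intro x hx1 hx2
    obtain ⟨a, rfl⟩ := hx1
    have h1 : π₁ (ρ₁ a) ∈ B₁ := hx2.1
    rw [hρ₁π a] at h1
    have h2 : (a : M₁) ∈ A₁ ⊓ B₁ := ⟨a.2, h1⟩
    rw [hc₁.inf_eq_bot, Submodule.mem_bot] at h2
    have ha0 : a = 0 := Subtype.ext (by simpa using h2)
    rw [ha0, map_zero]
  have hP'sub : P' ≤ C' ⊔ Bp := by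
    intro x hx
    have hx1 : π₁ x ∈ A₁ ⊔ B₁ := by rw [hc₁.sup_eq_top]; trivial
    obtain ⟨a, ha, b, hb, hab⟩ := Submodule.mem_sup.mp hx1
    refine Submodule.mem_sup.mpr ⟨ρ₁ ⟨a, ha⟩, ⟨_, rfl⟩, x - ρ₁ ⟨a, ha⟩, ⟨?_, ?_⟩, by abel⟩
    · show π₁ (x - ρ₁ ⟨a, ha⟩) ∈ B₁
      rw [map_sub, hρ₁π ⟨a, ha⟩]
      have : π₁ x - a = b := by rw [← hab]; abel
      rw [this]; exact hb
    · show π₂ (x - ρ₁ ⟨a, ha⟩) ∈ B₂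
      rw [map_sub]
      exact Submodule.sub_mem _ hx (hN'P' (hρ₁N ⟨a, ha⟩))
  refine ⟨C ⊔ C', Bp, ⟨?_, ?_⟩, sup_le hCN (le_trans hC'N' hN'N), ?_⟩
  · rw [disjoint_iff, eq_bot_iff]
    rintro x ⟨hx1, hx2⟩
    obtain ⟨c, hc, c', hc', rfl⟩ := Submodule.mem_sup.mp hx1
    have hcP' : c ∈ P' := by
      have h3 : c = (c + c') - c' := by abel
      rw [h3]
      exact Submodule.sub_mem _ (hBpP' hx2) (hN'P' (hC'N' hc'))
    have hc0 : c = 0 := by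
      have := hCP'.le_bot ⟨hc, hcP'⟩
      rwa [Submodule.mem_bot] at this
    rw [hc0, zero_add] at hx2 ⊢
    rw [hC'Bp c' hc' hx2]
    exact Submodule.zero_mem _
  · rw [codisjoint_iff, eq_top_iff]
    rw [← hCP'top]
    refine sup_le (le_trans le_sup_left le_sup_left) ?_
    refine le_trans hP'sub (sup_le ?_ le_sup_right)
    exact le_trans (le_sup_right (a := C)) le_sup_left
  · rintro x ⟨hxN, hxBp⟩
    have hxN' : x ∈ N' := hNP'N' ⟨hxN, hBpP' hxBp⟩
    have hx1 : π₁ x ∈ Submodule.map π₁ N' ⊓ B₁ := ⟨Submodule.mem_map_of_mem hxN', hxBp.1⟩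
    have hx2 : π₂ x ∈ Submodule.map π₂ N ⊓ B₂ := ⟨Submodule.mem_map_of_mem hxN, hxBp.2⟩
    exact mem_drad_prod (hrad₁ hx1) (hrad₂ hx2)

end Prod

section Transport

variable {R : Type*} [Ring R] {M M' : Type*} [AddCommGroup M] [Module R M]
  [AddCommGroup M'] [Module R M']

lemma dprop_congr (e : M ≃ₗ[R] M') (h : DProp R M) : DProp R M' := by
  intro N' hN'
  set N := Submodule.map (e.symm : M' →ₗ[R] M) N' with hNdef
  obtain ⟨A, B, hc, hAN, hrad⟩ := h N (hN'.map _)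
  have hmemN : ∀ x : M', x ∈ N' → e.symm x ∈ N := fun x hx => ⟨x, hx, rfl⟩
  refine ⟨Submodule.map (e : M →ₗ[R] M') A, Submodule.map (e : M →ₗ[R] M') B,
    ⟨?_, ?_⟩, ?_, ?_⟩
  · rw [disjoint_iff, eq_bot_iff]
    rintro x ⟨hx1, hx2⟩
    obtain ⟨a, ha, rfl⟩ := hx1
    obtain ⟨b, hb, hba⟩ := hx2
    have hab : a = b := by
      have := congrArg (e.symm : M' →ₗ[R] M) hba
      simpa using this.symm
    have : a ∈ A ⊓ B := ⟨ha, hab ▸ hb⟩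
    rw [hc.inf_eq_bot, Submodule.mem_bot] at this
    rw [this, map_zero]
    exact Submodule.zero_mem _
  · rw [codisjoint_iff, eq_top_iff]
    intro x _
    have hx : e.symm x ∈ A ⊔ B := by rw [hc.sup_eq_top]; trivial
    obtain ⟨a, ha, b, hb, hab⟩ := Submodule.mem_sup.mp hx
    have : x = e a + e b := by
      have := congrArg (e : M →ₗ[R] M') hab
      simpa using this.symm
    rw [this]
    exact Submodule.add_mem _ (le_sup_left (b := Submodule.map (e : M →ₗ[R] M') B)
        (Submodule.mem_map_of_mem ha))
      (le_sup_right (a := Submodule.map (e : M →ₗ[R] M') A) (Submodule.mem_map_of_mem hb))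
  · rintro x ⟨a, ha, rfl⟩
    have := hAN ha
    obtain ⟨y, hy, hya⟩ := this
    have heq : (e : M →ₗ[R] M') a = y := by rw [← hya]; simp
    rw [heq]; exact hy
  · rintro x ⟨hx1, hx2⟩
    obtain ⟨b, hb, rfl⟩ := hx2
    have hbN : b ∈ N := by
      have := hmemN _ hx1
      simpa using this
    have : b ∈ N ⊓ B := ⟨hbN, hb⟩
    exact drad_map_le (e : M →ₗ[R] M') (Submodule.mem_map_of_mem (hrad this))

end Transport

section Pi

variable {R : Type*} [Ring R]

/-- The linear equivalence `(Fin (n+1) → R) ≃ (Fin n → R) × R`. -/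
def finSuccLEquiv (n : ℕ) : (Fin (n + 1) → R) ≃ₗ[R] (Fin n → R) × R where
  toFun v := (fun i => v i.castSucc, v (Fin.last n))
  invFun p := fun i => Fin.lastCases p.2 p.1 i
  map_add' v w := rfl
  map_smul' c v := rfl
  left_inv v := by
    funext i
    refine Fin.lastCases ?_ (fun j => ?_) i
    · simp
    · simp
  right_inv p := by
    refine Prod.ext ?_ ?_
    · funext j
      simp
    · simp

lemma dprop_pi (h : IsSemiregularRing R) (n : ℕ) : DProp R (Fin n → R) := by
  induction n with
  | zero =>
    intro N _
    refine ⟨⊥, ⊤, isCompl_bot_top, bot_le, ?_⟩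
    intro x _
    have : x = 0 := funext (fun i => absurd i.2 (by omega))
    rw [this]
    exact Submodule.zero_mem _
  | succ n ih =>
    exact dprop_congr (finSuccLEquiv n).symm (dprop_prod ih (dprop_ring h))

end Pi

section Main

variable {R : Type*} [Ring R]


theorem forward_dir (h : IsSemiregularRing R) (P : Type*) [AddCommGroup P] [Module R P]
    (hfin : Module.Finite R P) (hproj : Module.Projective R P) : IsDCSRickart R P := by
  intro φ
  set N := LinearMap.range φ with hNdef
  have hNFG : N.FG := by
    have h1 : (⊤ : Submodule R P).FG := Module.finite_def.mp hfin
    rw [hNdef, LinearMap.range_eq_map]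
    exact h1.map φ
  obtain ⟨n, σ, hσ⟩ := Module.Finite.exists_fin' R P
  obtain ⟨s, hs⟩ := Module.projective_lifting_property σ LinearMap.id hσ
  have hσs : ∀ x : P, σ (s x) = x := fun x => LinearMap.congr_fun hs x
  set Pt := LinearMap.range s with hPt
  set Nt := Submodule.map s N with hNt
  obtain ⟨A, B, hAB, hANt, hrad⟩ := dprop_pi h n Nt (hNFG.map s)
  have hNtPt : Nt ≤ Pt := by rintro x ⟨y, _, rfl⟩; exact ⟨y, rfl⟩
  have hAPt : A ≤ Pt := le_trans hANt hNtPt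
  set A' := Submodule.map σ A with hA'
  set B' := Submodule.map σ (Pt ⊓ B) with hB'
  have hA'N : A' ≤ N := by
    rintro x ⟨y, hy, rfl⟩
    obtain ⟨z, hz, rfl⟩ := hANt hy
    have : σ (s z) = z := hσs z
    rw [this]
    exact hz
  have hPtker : ∀ w ∈ Pt, σ w = 0 → w = 0 := by
    rintro w ⟨y, rfl⟩ h0
    rw [hσs y] at h0
    rw [h0, map_zero]
  have hdisj : Disjoint A' B' := by
    rw [disjoint_iff, eq_bot_iff]
    rintro x ⟨hx1, hx2⟩
    obtain ⟨u, hu, rfl⟩ := hx1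
    obtain ⟨v, hv, hveq⟩ := hx2
    have huv : u - v ∈ Pt := Submodule.sub_mem _ (hAPt hu) hv.1
    have h0 : σ (u - v) = 0 := by rw [map_sub, hveq, sub_self]
    have : u - v = 0 := hPtker _ huv h0
    have huveq : u = v := by
      have := sub_eq_zero.mp this; exact this
    have : u ∈ A ⊓ B := ⟨hu, huveq ▸ hv.2⟩
    rw [hAB.inf_eq_bot, Submodule.mem_bot] at this
    rw [this, map_zero]
    exact Submodule.zero_mem _
  have hPtdecomp : A ⊔ (Pt ⊓ B) = Pt := by
    calc A ⊔ (Pt ⊓ B) = A ⊔ (B ⊓ Pt) := by rw [inf_comm]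
    _ = (A ⊔ B) ⊓ Pt := (sup_inf_assoc_of_le B hAPt).symm
    _ = Pt := by rw [hAB.sup_eq_top, top_inf_eq]
  have hsup : A' ⊔ B' = ⊤ := by
    rw [hA', hB', ← Submodule.map_sup, hPtdecomp, hPt, ← LinearMap.range_comp, hs,
      LinearMap.range_id]
  have hNB' : N ⊓ B' ≤ Submodule.map σ (Nt ⊓ B) := by
    rintro x ⟨hxN, hxB'⟩
    obtain ⟨v, hv, rfl⟩ := hxB'
    obtain ⟨y, hy⟩ := hv.1
    have hvx : v = s (σ v) := by rw [← hy, hσs]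
    have hsv : s (σ v) ∈ Nt := ⟨σ v, hxN, rfl⟩
    exact ⟨v, ⟨hvx ▸ hsv, hv.2⟩, rfl⟩
  have hNB'drad : N ⊓ B' ≤ drad R P :=
    le_trans hNB' (le_trans (Submodule.map_mono hrad) (drad_map_le σ))
  have hcompl : IsCompl A' B' := ⟨hdisj, codisjoint_iff.mpr hsup⟩
  have hsmalltop : SmallIn (N ⊓ B') (⊤ : Submodule R P) := small_of_le_drad hNB'drad
  exact ⟨A', B', hcompl, hA'N, smallIn_of_le_summand hsmalltop inf_le_right hcompl⟩

-- converse pieces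
lemma idem_of_liesAbove {a : R} (hla : LiesAboveSummand (Submodule.span R {a})) :
    ∃ e : R, IsIdempotentElem e ∧ e ∈ Submodule.span R {a} ∧ a - a * e ∈ jacRad R := by
  obtain ⟨D, K, hc, hDN, hsm⟩ := hla
  set p := Submodule.projectionOnto D K hc with hp
  set e : R := (p 1 : R) with he
  have hpx : ∀ x : R, (p x : R) = x * e := by
    intro x
    have h1 : p x = x • p 1 := by
      have : x = x • (1 : R) := by rw [smul_eq_mul, mul_one]
      conv_lhs => rw [this]
      rw [map_smul]
    rw [h1]
    rfl
  have heD : e ∈ D := (p 1).2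
  have heidem : IsIdempotentElem e := by
    show e * e = e
    have h1 : p e = ⟨e, heD⟩ := Submodule.projectionOnto_apply_left hc ⟨e, heD⟩
    have h2 : (p e : R) = e := congrArg Subtype.val h1
    rw [← hpx e] at *
    exact h2
  have heN : e ∈ Submodule.span R {a} := hDN heD
  obtain ⟨c, hcE⟩ := Submodule.mem_span_singleton.mp heN
  rw [smul_eq_mul] at hcE
  have hKe : ∀ x ∈ K, x * e = 0 := by
    intro x hx
    rw [← hpx x]
    rw [Submodule.projectionOnto_apply_of_mem_right hc hx]
    rfl
  -- a - a*e ∈ span{a} ⊓ K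
  have haeK : a - a * e ∈ K := by
    have h1 : p (a - a * e) = 0 := by
      rw [map_sub]
      have h2 : p (a * e) = a • p e := by
        rw [← map_smul]; rfl
      have h3 : p e = ⟨e, heD⟩ := Submodule.projectionOnto_apply_left hc ⟨e, heD⟩
      have h4 : (p (a * e) : R) = a * e := by
        rw [h2, h3]; rfl
      have h5 : (p a : R) = a * e := hpx a
      refine Subtype.ext ?_
      show (p a : R) - (p (a*e) : R) = (0 : R)
      rw [h4, h5, sub_self]
    -- x with p x = 0 is in K
    have : (p (a - a * e) : R) + (Submodule.projectionOnto K D hc.symm (a - a * e) : R)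
        = a - a * e := Submodule.projection_add_projection_eq_self hc (a - a * e)
    rw [h1] at this
    simp only [Submodule.coe_zero, zero_add] at this
    rw [← this]
    exact (Submodule.projectionOnto K D hc.symm (a - a * e)).2
  have haeN : a - a * e ∈ Submodule.span R {a} := by
    have : a - a * e = (1 - a * c) • a := by
      rw [smul_eq_mul, ← hcE]; noncomm_ring
    rw [this]
    exact Submodule.smul_mem _ _ (Submodule.mem_span_singleton_self a)
  have hsmall2 : SmallIn (Submodule.span R {a - a * e}) K := by
    refine smallIn_mono hsm ?_
    rw [Submodule.span_le, Set.singleton_subset_iff]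
    exact ⟨haeN, haeK⟩
  have hsmalltop : SmallIn (Submodule.span R {a - a * e}) (⊤ : Submodule R R) :=
    smallIn_top_of_summand hc hsmall2
  exact ⟨e, heidem, heN, jac_gen_of_small hsmalltop⟩

lemma converse_dir (hd : IsDCSRickart R R) : IsSemiregularRing R := by
  have key : ∀ a : R, ∃ e : R, IsIdempotentElem e ∧ e ∈ Submodule.span R {a} ∧
      a - a * e ∈ jacRad R := by
    intro a
    have h1 := hd (LinearMap.toSpanSingleton R R a)
    rw [← LinearMap.span_singleton_eq_range] at h1
    exact idem_of_liesAbove h1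
  constructor
  · intro a
    obtain ⟨e, heidem, hemem, heJ⟩ := key a
    obtain ⟨c, hcE⟩ := Submodule.mem_span_singleton.mp hemem
    rw [smul_eq_mul] at hcE
    refine ⟨c, ?_⟩
    have : a - a * c * a = a - a * e := by rw [← hcE]; noncomm_ring
    rw [this]
    exact heJ
  · intro a ha
    obtain ⟨e, heidem, hemem, heJ⟩ := key a
    obtain ⟨c, hcE⟩ := Submodule.mem_span_singleton.mp hemem
    rw [smul_eq_mul] at hcE
    set g := e + (1 - e) * a * e with hg
    have hgidem : IsIdempotentElem g := by
      show g * g = g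
      have h1 : e * ((1 - e) * a * e) = 0 := by
        have : e * (1 - e) = 0 := by rw [mul_sub, mul_one, heidem.eq, sub_self]
        calc e * ((1 - e) * a * e) = (e * (1 - e)) * (a * e) := by noncomm_ring
        _ = 0 := by rw [this, zero_mul]
      have h2 : ((1 - e) * a * e) * e = (1 - e) * a * e := by
        rw [mul_assoc, heidem.eq]
      have h3 : ((1 - e) * a * e) * ((1 - e) * a * e) = 0 := by
        have he1e : e * (1 - e) = 0 := by rw [mul_sub, mul_one, heidem.eq, sub_self]
        calc ((1 - e) * a * e) * ((1 - e) * a * e)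
            = (1 - e) * a * (e * (1 - e)) * (a * e) := by noncomm_ring
        _ = 0 := by rw [he1e, mul_zero, zero_mul]
      calc g * g = e * e + e * ((1 - e) * a * e) + ((1 - e) * a * e) * e
            + ((1 - e) * a * e) * ((1 - e) * a * e) := by rw [hg]; noncomm_ring
      _ = e + 0 + (1 - e) * a * e + 0 := by rw [heidem.eq, h1, h2, h3]
      _ = g := by rw [hg]; noncomm_ring
    refine ⟨g, hgidem, ?_⟩
    have hea : e * a - e ∈ jacRad R := by
      have h1 : e * a - e = c * (a * a - a) := by rw [← hcE]; noncomm_ring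
      have h2 : a * a - a = -(a - a * a) := by noncomm_ring
      rw [h1, h2]
      exact Ideal.mul_mem_left _ c (neg_mem ha)
    have h3 : e - e * a * e ∈ jacRad R := by
      have hh : -((e * a - e) * e) = e * e - e * a * e := by noncomm_ring
      rw [heidem.eq] at hh
      rw [← hh]
      exact neg_mem (jac_mul_right hea e)
    have h4 : a * e - a ∈ jacRad R := by
      have : a * e - a = -(a - a * e) := by noncomm_ring
      rw [this]
      exact neg_mem heJ
    have h5 : g - a = (e - e * a * e) + (a * e - a) := by rw [hg]; noncomm_ring
    rw [h5]
    exact add_mem h3 h4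

end Main



/-- `R` is semiregular iff every finitely generated projective `R`-module is a
d-CS-Rickart module. -/
theorem semiregular_iff_fg_projective_dcsRickart
    {R : Type u} [Ring R] :
    IsSemiregularRing R ↔
    (∀ (P : Type u) [AddCommGroup P] [Module R P],
      Module.Finite R P → Module.Projective R P → IsDCSRickart R P) := by
  constructor
  · intro h P _ _ hfin hproj
    exact forward_dir h P hfin hproj
  · intro h
    exact converse_dir (h R inferInstance inferInstance)

end CSRickartPaper
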